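/- Let n ≥ 1 and let g : ℝⁿ → [0,∞) be a function such that for some t > 0 the superlevel set {x : g(x) ≥ t} is nonempty and bounded. Suppose that for every U ∈ O(n) there exists a_U ∈ ℝⁿ with g(U⁻¹x) = g(x + a_U) for all x ∈ ℝⁿ. Then there exists b ∈ ℝⁿ such that the translate x ↦ g(x + b) is radial: g(b + Ux) = g(b + x) for every U ∈ O(n) and every x ∈ ℝⁿ. (In particular this applies to any g ∈ LCₙ whose surface area measures are invariant under all rotations up to translation.) -/

import Mathlib

open Set

noncomputable section

abbrev Euc (n : ℕ) := EuclideanSpace ℝ (Fin n)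

namespace Stmt17Aux

variable {n : ℕ}

def rad (S : Set (Euc n)) (c : Euc n) : ℝ := sSup ((fun x => dist c x) '' S)

lemma rad_bdd {S : Set (Euc n)} (hbd : Bornology.IsBounded S) (c : Euc n) :
    BddAbove ((fun x => dist c x) '' S) := by
  obtain ⟨r, hr⟩ := hbd.subset_closedBall 0
  refine ⟨dist c 0 + r, ?_⟩
  rintro _ ⟨x, hx, rfl⟩
  have hx' : dist x 0 ≤ r := Metric.mem_closedBall.1 (hr hx)
  calc dist c x ≤ dist c 0 + dist 0 x := dist_triangle _ _ _
    _ ≤ dist c 0 + r := by rw [dist_comm 0 x]; linarith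

lemma dist_le_rad {S : Set (Euc n)} (hbd : Bornology.IsBounded S) (c : Euc n)
    {x : Euc n} (hx : x ∈ S) : dist c x ≤ rad S c :=
  le_csSup (rad_bdd hbd c) ⟨x, hx, rfl⟩

lemma rad_le {S : Set (Euc n)} (hne : S.Nonempty) {c : Euc n} {m : ℝ}
    (h : ∀ x ∈ S, dist c x ≤ m) : rad S c ≤ m :=
  csSup_le (hne.image _) (by rintro _ ⟨x, hx, rfl⟩; exact h x hx)

lemma rad_lipschitz {S : Set (Euc n)} (hne : S.Nonempty)
    (hbd : Bornology.IsBounded S) : LipschitzWith 1 (rad S) := by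
  apply LipschitzWith.of_le_add
  intro c c'
  apply rad_le hne
  intro x hx
  calc dist c x ≤ dist c c' + dist c' x := dist_triangle _ _ _
    _ ≤ dist c c' + rad S c' := by linarith [dist_le_rad hbd c' hx]
    _ = rad S c' + dist c c' := by ring

lemma center_exists_unique (S : Set (Euc n)) (hne : S.Nonempty)
    (hbd : Bornology.IsBounded S) :
    ∃! c : Euc n, ∀ c', rad S c ≤ rad S c' := by
  obtain ⟨x₀, hx₀⟩ := id hne
  have hrad0 : (0 : ℝ) ≤ rad S x₀ := by
    simpa using dist_le_rad hbd x₀ hx₀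
  -- existence
  have hcomp : IsCompact (Metric.closedBall x₀ (rad S x₀)) :=
    isCompact_closedBall _ _
  have hBne : (Metric.closedBall x₀ (rad S x₀)).Nonempty :=
    ⟨x₀, by simpa using hrad0⟩
  obtain ⟨c, hcB, hcmin⟩ := hcomp.exists_isMinOn hBne
    ((rad_lipschitz hne hbd).continuous.continuousOn)
  have hmin : ∀ c', rad S c ≤ rad S c' := by
    intro c'
    by_cases hc' : c' ∈ Metric.closedBall x₀ (rad S x₀)
    · exact hcmin hc'
    · have h1 : rad S x₀ < dist c' x₀ := by
        simpa [Metric.mem_closedBall] using hc'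
      have h2 : dist c' x₀ ≤ rad S c' := dist_le_rad hbd c' hx₀
      have h3 : rad S c ≤ rad S x₀ := hcmin (by simpa using hrad0)
      linarith
  refine ⟨c, hmin, ?_⟩
  -- uniqueness
  intro c₂ h₂
  by_contra hne'
  have hd : 0 < dist c₂ c := dist_pos.2 hne'
  set d := dist c₂ c with hdd
  set r := rad S c with hr
  have hrc₂ : rad S c₂ = r := le_antisymm (h₂ c) (hmin c₂)
  have hd2r : d ≤ 2 * r := by
    calc d ≤ dist c₂ x₀ + dist x₀ c := dist_triangle _ _ _
      _ ≤ rad S c₂ + rad S c := by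
          have := dist_le_rad hbd c₂ hx₀
          have h4 := dist_le_rad hbd c hx₀
          rw [dist_comm x₀ c]; linarith
      _ = 2 * r := by rw [hrc₂]; ring
  set m : Euc n := (2:ℝ)⁻¹ • (c₂ + c) with hm
  have key : ∀ x ∈ S, dist m x ^ 2 ≤ r ^ 2 - d ^ 2 / 4 := by
    intro x hx
    have hpar := parallelogram_law_with_norm ℝ (c₂ - x) (c - x)
    have hmx : m - x = (2:ℝ)⁻¹ • ((c₂ - x) + (c - x)) := by
      rw [hm]; module
    have h1 : dist m x = (2:ℝ)⁻¹ * ‖(c₂ - x) + (c - x)‖ := by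
      rw [dist_eq_norm, hmx, norm_smul]
      norm_num
    have h2 : (c₂ - x) - (c - x) = c₂ - c := by abel
    have hdc : d = ‖c₂ - c‖ := by rw [hdd, dist_eq_norm]
    have hc2x : ‖c₂ - x‖ ≤ r := by
      rw [← dist_eq_norm, ← hrc₂]; exact dist_le_rad hbd c₂ hx
    have hcx : ‖c - x‖ ≤ r := by
      rw [← dist_eq_norm]; exact dist_le_rad hbd c hx
    have hn1 : (0:ℝ) ≤ ‖c₂ - x‖ := norm_nonneg _
    have hn2 : (0:ℝ) ≤ ‖c - x‖ := norm_nonneg _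
    rw [h2] at hpar
    rw [h1]
    rw [← hdc] at hpar
    nlinarith [sq_nonneg (‖c₂ - x‖ - ‖c - x‖)]
  have hr0 : 0 < r := by linarith
  have hs2 : (0:ℝ) ≤ r ^ 2 - d ^ 2 / 4 := by nlinarith
  set s := Real.sqrt (r ^ 2 - d ^ 2 / 4) with hs
  have hradm : rad S m ≤ s := by
    apply rad_le hne
    intro x hx
    rw [← Real.sqrt_sq dist_nonneg]
    exact Real.sqrt_le_sqrt (key x hx)
  have hslt : s < r := by
    rw [hs]
    calc Real.sqrt (r ^ 2 - d ^ 2 / 4) < Real.sqrt (r ^ 2) := by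
          apply Real.sqrt_lt_sqrt hs2; nlinarith
      _ = r := by rw [Real.sqrt_sq hr0.le]
  have := hmin m
  linarith

def center (S : Set (Euc n)) (hne : S.Nonempty) (hbd : Bornology.IsBounded S) : Euc n :=
  (center_exists_unique S hne hbd).choose

lemma center_min (S : Set (Euc n)) (hne : S.Nonempty) (hbd : Bornology.IsBounded S) :
    ∀ c', rad S (center S hne hbd) ≤ rad S c' :=
  (center_exists_unique S hne hbd).choose_spec.1

lemma center_unique (S : Set (Euc n)) (hne : S.Nonempty) (hbd : Bornology.IsBounded S)
    {c : Euc n} (h : ∀ c', rad S c ≤ rad S c') : c = center S hne hbd :=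
  (center_exists_unique S hne hbd).choose_spec.2 c h

lemma rad_image (e : Euc n ≃ᵢ Euc n) (S : Set (Euc n)) (c : Euc n) :
    rad (e '' S) c = rad S (e.symm c) := by
  unfold rad
  congr 1
  rw [← Set.image_comp]
  apply Set.image_congr
  intro x _
  show dist c (e x) = dist (e.symm c) x
  conv_lhs => rw [← e.apply_symm_apply c]
  exact e.dist_eq _ _

lemma center_image (e : Euc n ≃ᵢ Euc n) (S : Set (Euc n)) (hne : S.Nonempty)
    (hbd : Bornology.IsBounded S) (hne' : (e '' S).Nonempty)
    (hbd' : Bornology.IsBounded (e '' S)) :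
    center (e '' S) hne' hbd' = e (center S hne hbd) := by
  refine (center_unique _ hne' hbd' ?_).symm
  intro c'
  rw [rad_image, rad_image, e.symm_apply_apply]
  exact center_min S hne hbd _

end Stmt17Aux

theorem stmt17 {n : ℕ} (hn : 1 ≤ n) (g : Euc n → ℝ) (hg0 : ∀ x, 0 ≤ g x)
    (t : ℝ) (ht : 0 < t)
    (hne : {x : Euc n | t ≤ g x}.Nonempty)
    (hbd : Bornology.IsBounded {x : Euc n | t ≤ g x})
    (htrans : ∀ U : Euc n ≃ₗᵢ[ℝ] Euc n, ∃ a : Euc n,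
      ∀ x : Euc n, g (U.symm x) = g (x + a)) :
    ∃ b : Euc n, ∀ (U : Euc n ≃ₗᵢ[ℝ] Euc n) (x : Euc n), g (b + U x) = g (b + x) := by
  classical
  set S : Set (Euc n) := {x : Euc n | t ≤ g x} with hS
  set c : Euc n := Stmt17Aux.center S hne hbd with hc
  refine ⟨c, ?_⟩
  intro U x
  obtain ⟨a, ha⟩ := htrans U
  -- the two isometry equivalences
  set e₁ : Euc n ≃ᵢ Euc n := U.toIsometryEquiv with he₁
  set e₂ : Euc n ≃ᵢ Euc n := IsometryEquiv.subRight a with he₂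
  have himg : e₁ '' S = e₂ '' S := by
    ext y
    constructor
    · rintro ⟨z, hz, rfl⟩
      refine ⟨U z + a, ?_, ?_⟩
      · show t ≤ g (U z + a)
        rw [← ha (U z), U.symm_apply_apply]
        exact hz
      · show U z + a - a = e₁ z
        simp [he₁]
    · rintro ⟨z, hz, rfl⟩
      refine ⟨U.symm (z - a), ?_, ?_⟩
      · show t ≤ g (U.symm (z - a))
        rw [ha (z - a)]
        simpa using (show t ≤ g z from hz)
      · show e₁ (U.symm (z - a)) = z - a
        simp [he₁]
  have hne1 : (e₁ '' S).Nonempty := hne.image _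
  have hbd1 : Bornology.IsBounded (e₁ '' S) :=
    (e₁.isometry.lipschitz.isBounded_image hbd)
  have hkey : e₁ c = e₂ c := by
    have h2 := Stmt17Aux.center_image e₂ S hne hbd
      (by rw [← himg]; exact hne1) (by rw [← himg]; exact hbd1)
    rw [← h2]
    apply Stmt17Aux.center_unique
    intro c'
    rw [← himg, Stmt17Aux.rad_image, Stmt17Aux.rad_image, e₁.symm_apply_apply]
    exact Stmt17Aux.center_min S hne hbd _
  have hUc : U c = c - a := by
    have : e₁ c = c - a := by rw [hkey]; rfl
    simpa [he₁] using this
  have := ha (U (c + x))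
  rw [U.symm_apply_apply] at this
  rw [this]
  have : U (c + x) + a = c + U x := by
    rw [map_add, hUc]; abel
  rw [this]
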